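/- There exist five 4×4 Hermitian matrices A_1,...,A_5 with A_1 invertible such that {A_1⁻¹A_1,...,A_1⁻¹A_5} is a commuting family of matrices with only real eigenvalues, yet {A_1,...,A_5} is not ASDC. Concretely, one may take A_1 the reversal (anti-identity) matrix F_4, A_2 = e_3e_4* + e_4e_3*, A_3 = −i e_3 e_4* + i e_4 e_3*, A_4 = e_3e_3*, A_5 = e_4e_4*; the real algebra generated by A_1⁻¹{A_1,...,A_5} has dimension 5 > 4, so by the dimension bound the set is not ASDC. -/

import Mathlib

open Matrix Complex
open scoped Matrix.Norms.L2Operator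

noncomputable def A₁ : Matrix (Fin 4) (Fin 4) ℂ := !![0,0,0,1; 0,0,1,0; 0,1,0,0; 1,0,0,0]
noncomputable def A₂ : Matrix (Fin 4) (Fin 4) ℂ := !![0,0,0,0; 0,0,0,0; 0,0,0,1; 0,0,1,0]
noncomputable def A₃ : Matrix (Fin 4) (Fin 4) ℂ :=
  !![0,0,0,0; 0,0,0,0; 0,0,0,-Complex.I; 0,0,Complex.I,0]
noncomputable def A₄ : Matrix (Fin 4) (Fin 4) ℂ := !![0,0,0,0; 0,0,0,0; 0,0,1,0; 0,0,0,0]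
noncomputable def A₅ : Matrix (Fin 4) (Fin 4) ℂ := !![0,0,0,0; 0,0,0,0; 0,0,0,0; 0,0,0,1]

noncomputable def obstructionFamily : Fin 5 → Matrix (Fin 4) (Fin 4) ℂ :=
  ![A₁, A₂, A₃, A₄, A₅]

/-! ### Auxiliary lemmas -/

/-- Entries are bounded by the L2 operator norm. -/
lemma entry_le_l2_opNorm (M : Matrix (Fin 4) (Fin 4) ℂ) (i j : Fin 4) : ‖M i j‖ ≤ ‖M‖ := by
  classical
  set x : EuclideanSpace ℂ (Fin 4) := EuclideanSpace.single j 1 with hx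
  have hxnorm : ‖x‖ = 1 := by simp [hx, EuclideanSpace.norm_single]
  set v : EuclideanSpace ℂ (Fin 4) := (EuclideanSpace.equiv (Fin 4) ℂ).symm (M *ᵥ x) with hv
  have hvM : ‖v‖ ≤ ‖M‖ := by
    have h := M.l2_opNorm_mulVec x
    rw [hxnorm, mul_one] at h
    exact h
  have hvi : v i = M i j := by
    show (M *ᵥ x) i = M i j
    simp [hx, Matrix.mulVec, dotProduct, EuclideanSpace.single_apply]
  have hiv : ‖v i‖ ≤ ‖v‖ := by
    have h1 : (inner ℂ (EuclideanSpace.single i (1:ℂ)) v : ℂ) = v i := by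
      simp [EuclideanSpace.inner_single_left]
    calc ‖v i‖ = ‖(inner ℂ (EuclideanSpace.single i (1:ℂ)) v : ℂ)‖ := by rw [h1]
      _ ≤ ‖(EuclideanSpace.single i (1:ℂ) : EuclideanSpace ℂ (Fin 4))‖ * ‖v‖ :=
          norm_inner_le_norm _ _
      _ = ‖v‖ := by simp [EuclideanSpace.norm_single]
  calc ‖M i j‖ = ‖v i‖ := by rw [hvi]
    _ ≤ ‖v‖ := hiv
    _ ≤ ‖M‖ := hvM

lemma A₁_mul_A₁ : A₁ * A₁ = 1 := by
  ext a b
  fin_cases a <;> fin_cases b <;>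
    simp [A₁, Matrix.mul_apply, Fin.sum_univ_four, Matrix.one_apply,
      Matrix.vecHead, Matrix.vecTail]

lemma A₁_unit : IsUnit A₁ := ⟨⟨A₁, A₁, A₁_mul_A₁, A₁_mul_A₁⟩, rfl⟩

lemma A₁_inv : A₁⁻¹ = A₁ := Matrix.inv_eq_right_inv A₁_mul_A₁

/-- The support property shared by `A₂, ..., A₅`: the first two rows and the first two
columns vanish. -/
def Supp (X : Matrix (Fin 4) (Fin 4) ℂ) : Prop :=
  ∀ a, X a 0 = 0 ∧ X a 1 = 0 ∧ X 0 a = 0 ∧ X 1 a = 0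

lemma A₂supp : Supp A₂ := by
  intro a; fin_cases a <;> simp [Supp, A₂, Matrix.vecHead, Matrix.vecTail]
lemma A₃supp : Supp A₃ := by
  intro a; fin_cases a <;> simp [Supp, A₃, Matrix.vecHead, Matrix.vecTail]
lemma A₄supp : Supp A₄ := by
  intro a; fin_cases a <;> simp [Supp, A₄, Matrix.vecHead, Matrix.vecTail]
lemma A₅supp : Supp A₅ := by
  intro a; fin_cases a <;> simp [Supp, A₅, Matrix.vecHead, Matrix.vecTail]

lemma BB_zero {X Y : Matrix (Fin 4) (Fin 4) ℂ} (hX : Supp X) (hY : Supp Y) :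
    (A₁ * X) * (A₁ * Y) = 0 := by
  have hmid : X * (A₁ * Y) = 0 := by
    ext a b
    rw [Matrix.mul_apply, Fin.sum_univ_four]
    have h2 : (A₁ * Y) 2 b = 0 := by
      rw [Matrix.mul_apply, Fin.sum_univ_four]
      simp [A₁, Matrix.vecHead, Matrix.vecTail, (hY b).2.2.2]
    have h3 : (A₁ * Y) 3 b = 0 := by
      rw [Matrix.mul_apply, Fin.sum_univ_four]
      simp [A₁, Matrix.vecHead, Matrix.vecTail, (hY b).2.2.1]
    rw [(hX a).1, (hX a).2.1, h2, h3]
    simp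
  calc (A₁ * X) * (A₁ * Y) = A₁ * (X * (A₁ * Y)) := by rw [Matrix.mul_assoc]
    _ = 0 := by rw [hmid, Matrix.mul_zero]

lemma hrep : ∀ k : Fin 5, obstructionFamily k = A₁ ∨ Supp (obstructionFamily k) := by
  intro k
  fin_cases k
  · left; rfl
  · right; exact A₂supp
  · right; exact A₃supp
  · right; exact A₄supp
  · right; exact A₅supp

lemma herm₁ : A₁.IsHermitian := by
  ext a b
  fin_cases a <;> fin_cases b <;>
    simp [A₁, Matrix.conjTranspose_apply, Matrix.vecHead, Matrix.vecTail]
lemma herm₂ : A₂.IsHermitian := by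
  ext a b
  fin_cases a <;> fin_cases b <;>
    simp [A₂, Matrix.conjTranspose_apply, Matrix.vecHead, Matrix.vecTail]
lemma herm₃ : A₃.IsHermitian := by
  ext a b
  fin_cases a <;> fin_cases b <;>
    simp [A₃, Matrix.conjTranspose_apply, Matrix.vecHead, Matrix.vecTail]
lemma herm₄ : A₄.IsHermitian := by
  ext a b
  fin_cases a <;> fin_cases b <;>
    simp [A₄, Matrix.conjTranspose_apply, Matrix.vecHead, Matrix.vecTail]
lemma herm₅ : A₅.IsHermitian := by
  ext a b
  fin_cases a <;> fin_cases b <;>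
    simp [A₅, Matrix.conjTranspose_apply, Matrix.vecHead, Matrix.vecTail]

/-- If the nonzero scalar inverse exists and `B` squares to zero, `μ•1 - B` is a unit. -/
lemma unit_of_sq_zero {B : Matrix (Fin 4) (Fin 4) ℂ} (hB2 : B * B = 0) {μ : ℂ} (hμ0 : μ ≠ 0) :
    IsUnit (algebraMap ℂ (Matrix (Fin 4) (Fin 4) ℂ) μ - B) := by
  set C : Matrix (Fin 4) (Fin 4) ℂ := μ⁻¹ • (1 : Matrix (Fin 4) (Fin 4) ℂ)
    + (μ⁻¹ * μ⁻¹) • B with hC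
  have e1 : μ⁻¹ * μ = 1 := inv_mul_cancel₀ hμ0
  have e2 : μ * μ⁻¹ = 1 := mul_inv_cancel₀ hμ0
  have key1 : (algebraMap ℂ (Matrix (Fin 4) (Fin 4) ℂ) μ - B) * C = 1 := by
    rw [Algebra.algebraMap_eq_smul_one, hC]
    simp only [sub_mul, mul_add, Matrix.smul_mul, Matrix.mul_smul, one_mul, mul_one,
      smul_smul, hB2, smul_zero, add_zero, sub_zero]
    have e3 : μ⁻¹ * μ⁻¹ * μ = μ⁻¹ := by
      rw [mul_assoc, e1, mul_one]
    rw [e1, e3]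
    simp only [one_smul]
    abel
  have key2 : C * (algebraMap ℂ (Matrix (Fin 4) (Fin 4) ℂ) μ - B) = 1 := by
    rw [Algebra.algebraMap_eq_smul_one, hC]
    simp only [mul_sub, add_mul, Matrix.smul_mul, Matrix.mul_smul, one_mul, mul_one,
      smul_smul, hB2, smul_zero, add_zero, sub_zero]
    have e4 : μ * (μ⁻¹ * μ⁻¹) = μ⁻¹ := by
      rw [← mul_assoc, e2, one_mul]
    rw [e2, e4]
    simp only [one_smul]
    abel
  exact ⟨⟨_, C, key1, key2⟩, rfl⟩

/-! ### The main theorem -/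

theorem obstruction_m_eq_5 :
    (∀ i, (obstructionFamily i).IsHermitian) ∧
    IsUnit A₁ ∧
    (∀ i j, Commute (A₁⁻¹ * obstructionFamily i) (A₁⁻¹ * obstructionFamily j)) ∧
    (∀ i, ∀ μ ∈ spectrum ℂ (A₁⁻¹ * obstructionFamily i), μ.im = 0) ∧
    ¬ (∀ ε > (0 : ℝ), ∃ At : Fin 5 → Matrix (Fin 4) (Fin 4) ℂ,
        (∀ i, (At i).IsHermitian) ∧ (∀ i, ‖obstructionFamily i - At i‖ ≤ ε) ∧
        ∃ P : Matrix (Fin 4) (Fin 4) ℂ, IsUnit P ∧ ∀ i, (Pᴴ * At i * P).IsDiag) := by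
  refine ⟨?_, A₁_unit, ?_, ?_, ?_⟩
  · -- Hermitian
    intro i
    fin_cases i
    · exact herm₁
    · exact herm₂
    · exact herm₃
    · exact herm₄
    · exact herm₅
  · -- Commute
    intro i j
    rw [A₁_inv]
    rcases hrep i with hi | hi
    · rw [hi, A₁_mul_A₁]
      exact Commute.one_left _
    · rcases hrep j with hj | hj
      · rw [hj, A₁_mul_A₁]
        exact Commute.one_right _
      · show _ * _ = _ * _
        rw [BB_zero hi hj, BB_zero hj hi]
  · -- spectrum real
    intro i μ hμ
    rw [A₁_inv] at hμ
    by_contra him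
    rcases hrep i with hi | hi
    · rw [hi, A₁_mul_A₁] at hμ
      have hne : μ ≠ 1 := by
        intro h; rw [h] at him; exact him Complex.one_im
      have hu : IsUnit (algebraMap ℂ (Matrix (Fin 4) (Fin 4) ℂ) μ - 1) := by
        have he : algebraMap ℂ (Matrix (Fin 4) (Fin 4) ℂ) μ - 1
            = algebraMap ℂ (Matrix (Fin 4) (Fin 4) ℂ) (μ - 1) := by
          rw [map_sub]
          norm_num
        rw [he]
        exact (isUnit_iff_ne_zero.mpr (sub_ne_zero.mpr hne)).map
          (algebraMap ℂ (Matrix (Fin 4) (Fin 4) ℂ))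
      exact spectrum.notMem_iff.mpr hu hμ
    · have hμ0 : μ ≠ 0 := by
        intro h; rw [h] at him; exact him Complex.zero_im
      exact spectrum.notMem_iff.mpr (unit_of_sq_zero (BB_zero hi hi) hμ0) hμ
  · -- not ASDC
    intro h
    obtain ⟨At, hherm, hclose, P, hP, hdiag⟩ := h (1/10) (by norm_num)
    set D : Fin 5 → Matrix (Fin 4) (Fin 4) ℂ := fun i => Pᴴ * At i * P with hD
    have hDherm : ∀ i, (D i).IsHermitian := fun i =>
      Matrix.isHermitian_conjTranspose_mul_mul P (hherm i)
    set d : Fin 5 → Fin 4 → ℝ := fun i k => (D i k k).re with hd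
    have hDdiag : ∀ i, D i = Matrix.diagonal (fun k => ((d i k : ℝ) : ℂ)) := by
      intro i
      ext a b
      by_cases hab : a = b
      · subst hab
        rw [Matrix.diagonal_apply_eq]
        exact ((hDherm i).coe_re_apply_self a).symm
      · rw [Matrix.diagonal_apply_ne _ hab]
        exact hdiag i hab
    -- the five vectors d i ∈ ℝ⁴ are linearly dependent
    have hdep : ¬ LinearIndependent ℝ d := by
      intro hli
      have hcard := hli.fintype_card_le_finrank
      rw [Module.finrank_fintype_fun_eq_card] at hcard
      simp [Fintype.card_fin] at hcard
    obtain ⟨c, hsum, i₀, hc0⟩ := Fintype.not_linearIndependent_iff.mp hdep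
    -- hence ∑ c i • D i = 0
    have hDsum : ∑ i, (c i : ℂ) • D i = 0 := by
      ext a b
      simp only [Matrix.sum_apply, Matrix.smul_apply, Matrix.zero_apply, smul_eq_mul]
      by_cases hab : a = b
      · subst hab
        have hsa := congrFun hsum a
        simp only [Finset.sum_apply, Pi.smul_apply, smul_eq_mul, Pi.zero_apply] at hsa
        rw [Finset.sum_congr rfl (fun i _ => by
          rw [hDdiag i, Matrix.diagonal_apply_eq])]
        calc ∑ i, (c i : ℂ) * ((d i a : ℝ) : ℂ)
            = ((∑ i, c i * d i a : ℝ) : ℂ) := by push_cast; rfl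
          _ = 0 := by rw [hsa]; exact Complex.ofReal_zero
      · rw [Finset.sum_congr rfl (fun i _ => by
          rw [hDdiag i, Matrix.diagonal_apply_ne _ hab, mul_zero])]
        simp
    -- hence ∑ c i • At i = 0
    have hAtsum : ∑ i, (c i : ℂ) • At i = 0 := by
      have hfac : ∑ i, (c i : ℂ) • D i = Pᴴ * ((∑ i, (c i : ℂ) • At i) * P) := by
        rw [Finset.sum_mul, Finset.mul_sum]
        refine Finset.sum_congr rfl fun i _ => ?_
        rw [hD]
        simp [Matrix.smul_mul, Matrix.mul_smul, Matrix.mul_assoc]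
      rw [hfac] at hDsum
      have hPH : IsUnit Pᴴ := (Matrix.isUnit_conjTranspose P).mpr hP
      have h1 : (∑ i, (c i : ℂ) • At i) * P = 0 := by
        apply hPH.mul_left_cancel
        rw [hDsum, mul_zero]
      have h2 : (∑ i, (c i : ℂ) • At i) * P = 0 * P := by rw [h1, zero_mul]
      exact hP.mul_right_cancel h2
    set M : Matrix (Fin 4) (Fin 4) ℂ := ∑ i, (c i : ℂ) • obstructionFamily i with hM
    have hMd : M = ∑ i, (c i : ℂ) • (obstructionFamily i - At i) := by
      rw [hM]
      simp only [smul_sub, Finset.sum_sub_distrib, hAtsum, sub_zero]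
    -- norm bound
    have hMnorm : ‖M‖ ≤ (∑ i, |c i|) * (1/10) := by
      rw [hMd]
      calc ‖∑ i, (c i : ℂ) • (obstructionFamily i - At i)‖
          ≤ ∑ i, ‖(c i : ℂ) • (obstructionFamily i - At i)‖ := norm_sum_le _ _
        _ ≤ ∑ i, |c i| * (1/10) := by
            refine Finset.sum_le_sum fun i _ => ?_
            rw [norm_smul, Complex.norm_real, Real.norm_eq_abs]
            exact mul_le_mul_of_nonneg_left (hclose i) (abs_nonneg _)
        _ = (∑ i, |c i|) * (1/10) := by rw [Finset.sum_mul]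
    -- compute entries of M
    have hMexp : M = (c 0 : ℂ) • A₁ + (c 1 : ℂ) • A₂ + (c 2 : ℂ) • A₃
        + (c 3 : ℂ) • A₄ + (c 4 : ℂ) • A₅ := by
      rw [hM, Fin.sum_univ_five]
      rfl
    have hM03 : M 0 3 = (c 0 : ℂ) := by
      rw [hMexp]
      simp [Matrix.add_apply, Matrix.smul_apply, A₁, A₂, A₃, A₄, A₅,
        Matrix.vecHead, Matrix.vecTail]
    have hM23 : M 2 3 = (c 1 : ℂ) - (c 2 : ℂ) * Complex.I := by
      rw [hMexp]
      simp [Matrix.add_apply, Matrix.smul_apply, A₁, A₂, A₃, A₄, A₅,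
        Matrix.vecHead, Matrix.vecTail]
      ring
    have hM22 : M 2 2 = (c 3 : ℂ) := by
      rw [hMexp]
      simp [Matrix.add_apply, Matrix.smul_apply, A₁, A₂, A₃, A₄, A₅,
        Matrix.vecHead, Matrix.vecTail]
    have hM33 : M 3 3 = (c 4 : ℂ) := by
      rw [hMexp]
      simp [Matrix.add_apply, Matrix.smul_apply, A₁, A₂, A₃, A₄, A₅,
        Matrix.vecHead, Matrix.vecTail]
    -- each |c i| ≤ ‖M‖
    have hkey : ∀ i, |c i| ≤ ‖M‖ := by
      intro i
      fin_cases i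
      · calc |c 0| = ‖M 0 3‖ := by rw [hM03, Complex.norm_real, Real.norm_eq_abs]
          _ ≤ ‖M‖ := entry_le_l2_opNorm M 0 3
      · have hre : (M 2 3).re = c 1 := by rw [hM23]; simp
        calc |c 1| = |(M 2 3).re| := by rw [hre]
          _ ≤ ‖M 2 3‖ := Complex.abs_re_le_norm _
          _ = ‖M 2 3‖ := rfl
          _ ≤ ‖M‖ := entry_le_l2_opNorm M 2 3
      · have him : (M 2 3).im = -(c 2) := by rw [hM23]; simp
        calc |c 2| = |(M 2 3).im| := by rw [him, abs_neg]
          _ ≤ ‖M 2 3‖ := Complex.abs_im_le_norm _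
          _ = ‖M 2 3‖ := rfl
          _ ≤ ‖M‖ := entry_le_l2_opNorm M 2 3
      · calc |c 3| = ‖M 2 2‖ := by rw [hM22, Complex.norm_real, Real.norm_eq_abs]
          _ ≤ ‖M‖ := entry_le_l2_opNorm M 2 2
      · calc |c 4| = ‖M 3 3‖ := by rw [hM33, Complex.norm_real, Real.norm_eq_abs]
          _ ≤ ‖M‖ := entry_le_l2_opNorm M 3 3
    -- contradiction
    set S := ∑ i, |c i| with hS
    have hSle : S ≤ 5 * (S * (1/10)) := by
      have hstep : ∀ i ∈ Finset.univ, |c i| ≤ S * (1/10) :=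
        fun i _ => le_trans (hkey i) hMnorm
      calc S = ∑ i : Fin 5, |c i| := rfl
        _ ≤ ∑ _i : Fin 5, S * (1/10) := Finset.sum_le_sum hstep
        _ = 5 * (S * (1/10)) := by
            rw [Finset.sum_const, Finset.card_univ, Fintype.card_fin]
            ring
    have hSpos : 0 < S := by
      have h1 : |c i₀| ≤ S := by
        rw [hS]
        exact Finset.single_le_sum (fun i _ => abs_nonneg (c i)) (Finset.mem_univ i₀)
      have h2 : 0 < |c i₀| := abs_pos.mpr hc0
      linarith
    linarith
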